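/- If a heavy path in the heavy-rooted-pathwidth decomposition of T descends to a light child u of a vertex v (i.e., one crosses a light edge from v to u), then rpw(T(u)) < rpw(T(v)). Consequently, any root-to-leaf path in T crosses at most rpw(T) − 1 light edges. -/

import Mathlib

/-- Rooted trees. -/
inductive RTree where
  | node : List RTree → RTree

/-- Rooted pathwidth. -/
def RTree.rpw : RTree → ℕ
  | .node ts =>
    let ks := ts.attach.map (fun x => RTree.rpw x.1)
    let k := ks.foldr max 0
    if ks.count k = 1 then k else k + 1
decreasing_by
  have := List.sizeOf_lt_of_mem x.2
  simp [RTree.node.sizeOf_spec]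
  omega

/-- Maximum number of light edges on a root-to-leaf path: an edge to a child `c` is
(possibly) light iff `c` does not attain the maximum `rpw` among the children, or
the maximum is attained by more than one child (so that the count is valid under
every tie-breaking choice of the heavy child). -/
def RTree.lightDepth : RTree → ℕ
  | .node ts =>
    let k := (ts.map RTree.rpw).foldr max 0
    let cnt := (ts.map RTree.rpw).count k
    (ts.attach.map (fun x =>
      if RTree.rpw x.1 = k ∧ cnt = 1 then RTree.lightDepth x.1
      else RTree.lightDepth x.1 + 1)).foldr max 0
decreasing_by
  all_goals
    have := List.sizeOf_lt_of_mem x.2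
    simp [RTree.node.sizeOf_spec]
    omega

lemma rpw_eq (ts : List RTree) :
    RTree.rpw (.node ts) =
      (if (ts.map RTree.rpw).count ((ts.map RTree.rpw).foldr max 0) = 1
        then (ts.map RTree.rpw).foldr max 0
        else (ts.map RTree.rpw).foldr max 0 + 1) := by
  rw [RTree.rpw]
  simp [List.attach_map_val]

lemma le_foldr_max {l : List ℕ} {a : ℕ} (h : a ∈ l) : a ≤ l.foldr max 0 := by
  induction l with
  | nil => simp at h
  | cons b l ih =>
    rcases List.mem_cons.mp h with rfl | h
    · exact le_max_left _ _
    · exact le_trans (ih h) (le_max_right _ _)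

lemma foldr_max_le {l : List ℕ} {b : ℕ} (h : ∀ a ∈ l, a ≤ b) : l.foldr max 0 ≤ b := by
  induction l with
  | nil => simp
  | cons c l ih =>
    simp only [List.foldr_cons, max_le_iff]
    exact ⟨h c (by simp), ih fun a ha => h a (by simp [ha])⟩

lemma rpw_pos : ∀ T : RTree, 1 ≤ T.rpw
  | .node ts => by
    rw [rpw_eq]
    split
    · rename_i h
      have hm : (ts.map RTree.rpw).foldr max 0 ∈ ts.map RTree.rpw :=
        List.count_pos_iff.mp (by omega)
      obtain ⟨c, hcm, hc⟩ := List.mem_map.mp hm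
      rw [← hc]
      exact rpw_pos c
    · omega
termination_by T => sizeOf T
decreasing_by
  have := List.sizeOf_lt_of_mem hcm
  simp [RTree.node.sizeOf_spec]
  omega

lemma rpw_le_k (ts : List RTree) (c : RTree) (hc : c ∈ ts) :
    RTree.rpw c ≤ (ts.map RTree.rpw).foldr max 0 :=
  le_foldr_max (List.mem_map_of_mem hc)

lemma part_a (ts : List RTree) (c : RTree) (hc : c ∈ ts)
    (h : RTree.rpw c < (ts.map RTree.rpw).foldr max 0 ∨
        2 ≤ (ts.map RTree.rpw).count ((ts.map RTree.rpw).foldr max 0)) :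
    RTree.rpw c < RTree.rpw (.node ts) := by
  have hk := rpw_le_k ts c hc
  rw [rpw_eq]
  split
  · rename_i hcnt
    rcases h with h | h
    · exact h
    · omega
  · omega

lemma part_b : ∀ T : RTree, T.lightDepth ≤ T.rpw - 1
  | .node ts => by
    rw [RTree.lightDepth]
    apply foldr_max_le
    intro a ha
    obtain ⟨x, hx, rfl⟩ := List.mem_map.mp ha
    have hmem : x.1 ∈ ts := x.2
    have ihx := part_b x.1
    have hpos := rpw_pos x.1
    have hk := rpw_le_k ts x.1 hmem
    split
    · rename_i hcond
      rw [rpw_eq, if_pos hcond.2, ← hcond.1]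
      omega
    · rename_i hcond
      rw [rpw_eq]
      by_cases hcnt : (ts.map RTree.rpw).count ((ts.map RTree.rpw).foldr max 0) = 1
      · rw [if_pos hcnt]
        have hne : RTree.rpw x.1 ≠ (ts.map RTree.rpw).foldr max 0 := by
          intro h; exact hcond ⟨h, hcnt⟩
        omega
      · rw [if_neg hcnt]
        omega
termination_by T => sizeOf T
decreasing_by
  have := List.sizeOf_lt_of_mem hmem
  simp [RTree.node.sizeOf_spec]
  omega

/-- (a) descending along a light edge strictly decreases the rooted
pathwidth: if `c` is a (possibly-)light child of the root of `node ts` — i.e. `c`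
does not uniquely attain the maximum rooted pathwidth `k` among the children —
then `rpw c < rpw (node ts)`; (b) consequently, every root-to-leaf path crosses at
most `rpw T − 1` light edges. -/
theorem stmt_9 :
    (∀ (ts : List RTree) (c : RTree), c ∈ ts →
      (RTree.rpw c < (ts.map RTree.rpw).foldr max 0 ∨
        2 ≤ (ts.map RTree.rpw).count ((ts.map RTree.rpw).foldr max 0)) →
      RTree.rpw c < RTree.rpw (.node ts)) ∧
    (∀ T : RTree, T.lightDepth ≤ T.rpw - 1) := by
  exact ⟨part_a, part_b⟩
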